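/- Let A, M be real N×N matrices with M invertible, P a real N×N_H matrix, B_H an invertible N_H×N_H matrix, and A_H := Pᵀ A P. Fix ν ≥ 1 and a real polynomial q_{ν−1} of degree at most ν−1, and set p_ν(x) := 1 − q_{ν−1}(x)·x and p̃_ν(x) := p_ν(1−x). Define M̄⁻¹ := M⁻¹ + M⁻ᵀ − M⁻ᵀ A M⁻¹, B_{H,ν}⁻¹ := q_{ν−1}(B_H⁻¹ A_H) B_H⁻¹, B⁻¹ := M̄⁻¹ + (I − M⁻ᵀ A) P B_{H,ν}⁻¹ Pᵀ (I − A M⁻¹), and E_H := I − P B_H⁻¹ Pᵀ A. Then I − B⁻¹ A = (I − M⁻ᵀ A) · p̃_ν(E_H) · (I − M⁻¹ A). -/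

import Mathlib

open Matrix Polynomial

private lemma pow_swap {n m : ℕ} (X : Matrix (Fin n) (Fin m) ℝ)
    (Y : Matrix (Fin m) (Fin n) ℝ) (k : ℕ) :
    X * (Y * X) ^ k = (X * Y) ^ k * X := by
  induction k with
  | zero => simp
  | succ k ih =>
    rw [pow_succ, pow_succ, ← Matrix.mul_assoc, ih, Matrix.mul_assoc,
      ← Matrix.mul_assoc X Y X, ← Matrix.mul_assoc]

private lemma aeval_swap {n m : ℕ} (X : Matrix (Fin n) (Fin m) ℝ)
    (Y : Matrix (Fin m) (Fin n) ℝ) (q : Polynomial ℝ) :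
    X * aeval (Y * X) q = aeval (X * Y) q * X := by
  induction q using Polynomial.induction_on' with
  | add p r hp hr => simp [map_add, Matrix.mul_add, Matrix.add_mul, hp, hr]
  | monomial k a =>
    simp only [aeval_monomial, Algebra.algebraMap_eq_smul_one, smul_mul_assoc,
      one_mul, mul_smul_comm]
    rw [Matrix.mul_smul, Matrix.smul_mul, pow_swap]

private lemma amli_abstract {n : ℕ} (A Mi Mt Q G : Matrix (Fin n) (Fin n) ℝ) :
    1 - (Mi + Mt - Mt * A * Mi + (1 - Mt * A) * (Q * G) * (1 - A * Mi)) * A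
      = (1 - Mt * A) * (1 - Q * (G * A)) * (1 - Mi * A) := by
  noncomm_ring

theorem amli_error_propagation (N NH : ℕ)
    (A M : Matrix (Fin N) (Fin N) ℝ) (hM : IsUnit M.det)
    (P : Matrix (Fin N) (Fin NH) ℝ)
    (BH : Matrix (Fin NH) (Fin NH) ℝ) (hBH : IsUnit BH.det)
    (AH : Matrix (Fin NH) (Fin NH) ℝ) (hAH : AH = Pᵀ * A * P)
    (ν : ℕ) (hν : 1 ≤ ν)
    (qpoly : Polynomial ℝ) (hdeg : qpoly.natDegree ≤ ν - 1)
    (pν ptildeν : Polynomial ℝ)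
    (hp : pν = 1 - qpoly * X)
    (hptilde : ptildeν = pν.comp (1 - X))
    (MbarInv : Matrix (Fin N) (Fin N) ℝ)
    (hMbarInv : MbarInv = M⁻¹ + Mᵀ⁻¹ - Mᵀ⁻¹ * A * M⁻¹)
    (BHνInv : Matrix (Fin NH) (Fin NH) ℝ)
    (hBHνInv : BHνInv = (aeval (BH⁻¹ * AH) qpoly) * BH⁻¹)
    (BInv : Matrix (Fin N) (Fin N) ℝ)
    (hBInv : BInv = MbarInv + (1 - Mᵀ⁻¹ * A) * P * BHνInv * Pᵀ * (1 - A * M⁻¹))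
    (EH : Matrix (Fin N) (Fin N) ℝ)
    (hEH : EH = 1 - P * BH⁻¹ * Pᵀ * A) :
    1 - BInv * A = (1 - Mᵀ⁻¹ * A) * (aeval EH ptildeν) * (1 - M⁻¹ * A) := by
  subst hAH hp hptilde hMbarInv hBHνInv hBInv hEH
  set Q := aeval (P * BH⁻¹ * Pᵀ * A) qpoly with hQ
  have h1 : aeval (1 - P * BH⁻¹ * Pᵀ * A) ((1 - qpoly * X).comp (1 - X))
      = 1 - Q * (P * BH⁻¹ * Pᵀ * A) := by
    rw [aeval_comp]
    simp
    rfl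
  rw [h1]
  have key : P * (aeval (BH⁻¹ * (Pᵀ * A * P)) qpoly * BH⁻¹)
      = Q * (P * BH⁻¹) := by
    have h2 : BH⁻¹ * (Pᵀ * A * P) = (BH⁻¹ * Pᵀ * A) * P := by
      simp [Matrix.mul_assoc]
    rw [h2, ← Matrix.mul_assoc P, aeval_swap, hQ]
    simp [Matrix.mul_assoc]
  have hterm : (1 - Mᵀ⁻¹ * A) * P * (aeval (BH⁻¹ * (Pᵀ * A * P)) qpoly * BH⁻¹) * Pᵀ
      = (1 - Mᵀ⁻¹ * A) * (Q * (P * BH⁻¹ * Pᵀ)) := by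
    rw [Matrix.mul_assoc (1 - Mᵀ⁻¹ * A) P _, key, Matrix.mul_assoc,
      Matrix.mul_assoc Q]
  rw [hterm]
  have hGA : Q * (P * BH⁻¹ * Pᵀ * A) = Q * ((P * BH⁻¹ * Pᵀ) * A) := by
    rw [Matrix.mul_assoc (P * BH⁻¹) Pᵀ A, ← Matrix.mul_assoc (P * BH⁻¹)]
  rw [hGA]
  exact amli_abstract A M⁻¹ Mᵀ⁻¹ Q (P * BH⁻¹ * Pᵀ)
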